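/- arXiv:1911.09310 — 4 statements merged into one kernel-verified Lean document; each statement's English description precedes it below -/
import Mathlib

section
/- Let X be a measurable space, let μ_s and μ_t be probability measures on X (the source and target domains), let f_s, f_t : X → Bool be measurable labeling functions, and let H be a nonempty set of measurable hypotheses h : X → Bool. Define the errors ε_s(h) = μ_s{x : h(x) ≠ f_s(x)} and ε_t(h) = μ_t{x : h(x) ≠ f_t(x)}, and the HΔH-divergence d_{HΔH}(μ_s, μ_t) = 2 · sup over pairs h, h' ∈ H of |μ_s{x : h(x) ≠ h'(x)} − μ_t{x : h(x) ≠ h'(x)}|. Then for every h ∈ H, ε_t(h) ≤ (1/2) d_{HΔH}(μ_s, μ_t) + ε_s(h) + inf over h' ∈ H of (ε_t(h') + ε_s(h')). -/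
open MeasureTheory

private lemma tri_measure {X : Type*} [MeasurableSpace X]
    (μ : Measure X) [IsProbabilityMeasure μ] (f g k : X → Bool) :
    (μ {x | f x ≠ k x}).toReal ≤ (μ {x | f x ≠ g x}).toReal + (μ {x | g x ≠ k x}).toReal := by
  have hsub : {x | f x ≠ k x} ⊆ {x | f x ≠ g x} ∪ {x | g x ≠ k x} := by
    intro x hx
    by_cases hfg : f x = g x
    · right; simp only [Set.mem_setOf_eq]; intro hgk; exact hx (hfg.trans hgk)
    · left; exact hfg
  have h1 : μ {x | f x ≠ k x} ≤ μ {x | f x ≠ g x} + μ {x | g x ≠ k x} :=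
    le_trans (measure_mono hsub) (measure_union_le _ _)
  rw [← ENNReal.toReal_add (measure_ne_top μ _) (measure_ne_top μ _)]
  exact ENNReal.toReal_mono (by simp [ENNReal.add_ne_top, measure_ne_top]) h1

private lemma toReal_le_one {X : Type*} [MeasurableSpace X]
    (μ : Measure X) [IsProbabilityMeasure μ] (s : Set X) : (μ s).toReal ≤ 1 := by
  have := prob_le_one (μ := μ) (s := s)
  simpa using ENNReal.toReal_mono (by simp) this

/-- **Ben-David et al. domain adaptation bound (Theorem 1).**
For any hypothesis `h` in the class `H`, the target error is bounded by half the
`HΔH`-divergence between source and target, plus the source error of `h`, plus the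
infimum over `H` of the combined source and target errors. -/
theorem target_error_bound
    {X : Type*} [MeasurableSpace X]
    (μs μt : Measure X) [IsProbabilityMeasure μs] [IsProbabilityMeasure μt]
    (fs ft : X → Bool) (hfs : Measurable fs) (hft : Measurable ft)
    (H : Set (X → Bool)) (hH : H.Nonempty) (hHmeas : ∀ h ∈ H, Measurable h)
    (εs εt : (X → Bool) → ℝ)
    (hεs : ∀ h, εs h = (μs {x | h x ≠ fs x}).toReal)
    (hεt : ∀ h, εt h = (μt {x | h x ≠ ft x}).toReal)
    (d : ℝ)
    (hd : d = 2 * sSup {r : ℝ | ∃ h ∈ H, ∃ h' ∈ H,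
        r = |(μs {x | h x ≠ h' x}).toReal - (μt {x | h x ≠ h' x}).toReal|})
    (h : X → Bool) (hh : h ∈ H) :
    εt h ≤ (1 / 2) * d + εs h + ⨅ h' : H, (εt h' + εs h') := by
  set S : Set ℝ := {r : ℝ | ∃ h ∈ H, ∃ h' ∈ H,
      r = |(μs {x | h x ≠ h' x}).toReal - (μt {x | h x ≠ h' x}).toReal|} with hS
  have hbdd : BddAbove S := by
    refine ⟨1, ?_⟩
    rintro r ⟨a, _, b, _, rfl⟩
    rw [abs_sub_le_iff]
    have h1 := toReal_le_one μs {x | a x ≠ b x}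
    have h2 := toReal_le_one μt {x | a x ≠ b x}
    have h3 := ENNReal.toReal_nonneg (a := μs {x | a x ≠ b x})
    have h4 := ENNReal.toReal_nonneg (a := μt {x | a x ≠ b x})
    constructor <;> linarith
  have hne : Nonempty H := ⟨⟨hH.choose, hH.choose_spec⟩⟩
  rw [← sub_le_iff_le_add']
  apply le_ciInf
  rintro ⟨h', hh'⟩
  have key1 : εt h ≤ (μt {x | h x ≠ h' x}).toReal + εt h' := by
    rw [hεt h, hεt h']
    exact tri_measure μt h h' ft
  have key2 : (μs {x | h x ≠ h' x}).toReal ≤ εs h + εs h' := by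
    rw [hεs h, hεs h']
    have := tri_measure μs h fs h'
    have heq : {x | fs x ≠ h' x} = {x | h' x ≠ fs x} := by
      ext x; simp [ne_comm]
    rw [heq] at this
    exact this
  have hmem : |(μs {x | h x ≠ h' x}).toReal - (μt {x | h x ≠ h' x}).toReal| ∈ S :=
    ⟨h, hh, h', hh', rfl⟩
  have hsup : |(μs {x | h x ≠ h' x}).toReal - (μt {x | h x ≠ h' x}).toReal| ≤ sSup S :=
    le_csSup hbdd hmem
  have habs : (μt {x | h x ≠ h' x}).toReal - (μs {x | h x ≠ h' x}).toReal
      ≤ |(μs {x | h x ≠ h' x}).toReal - (μt {x | h x ≠ h' x}).toReal| := by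
    rw [abs_sub_comm]
    exact le_abs_self _
  have hd' : (1 / 2 : ℝ) * d = sSup S := by rw [hd]; ring
  linarith
end

section
/- Let X, Y, Z be nonempty finite types. Let p be a probability mass function on X × Y, let g : X → (probability mass function on Z) be a stochastic feature extractor, and define the joint distribution on X × Y × Z by p(x,y,z) = p(x,y)·g(x)(z) (the Markov chain Y → X → Z). Let h : Z → (probability mass function on Y) be any variational classifier, assumed strictly positive wherever the induced joint distribution of (Y,Z) is positive. Then Σ_{x,y,z} p(x,y)·g(x)(z)·log( h(z)(y) ) ≤ I(Y;Z) − H(Y), where I(Y;Z) is the mutual information of the induced joint distribution of (Y,Z) and H(Y) is the Shannon entropy of the Y-marginal of p. In particular, minimizing the expected cross-entropy loss maximizes a lower bound on I(Y;Z). -/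
open Finset

/-- Mutual information of a joint probability mass function on `A × B`
(with the convention `0 · log 0 = 0`, which holds automatically in `ℝ`). -/
noncomputable def mutualInfo {A B : Type} [Fintype A] [Fintype B] (p : A × B → ℝ) : ℝ :=
  ∑ a : A, ∑ b : B,
    p (a, b) * Real.log (p (a, b) / ((∑ b' : B, p (a, b')) * (∑ a' : A, p (a', b))))

/-- Shannon entropy of a probability mass function (convention `0 · log 0 = 0`). -/
noncomputable def shannonEntropy {A : Type} [Fintype A] (q : A → ℝ) : ℝ :=
  -∑ a : A, q a * Real.log (q a)

/-- The joint distribution of `(Y, Z)` induced by a joint distribution `p` on `X × Y`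
and a channel `g : X → PMF Z` (Markov chain `Y → X → Z`). -/
noncomputable def jointYZ {X Y Z : Type} [Fintype X] [Fintype Y] [Fintype Z]
    (p : X × Y → ℝ) (g : X → Z → ℝ) : Y × Z → ℝ :=
  fun yz => ∑ x : X, p (x, yz.1) * g x yz.2

/-- Gibbs-type inequality: the expected log of any sub-probability vector `k`
is at most the expected log of the normalized distribution `r / ∑ r`. -/
lemma gibbs_aux {Y : Type} [Fintype Y] (r k : Y → ℝ)
    (hr : ∀ y, 0 ≤ r y) (hk : ∀ y, 0 ≤ k y) (hk1 : ∑ y : Y, k y ≤ 1)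
    (hpos : ∀ y, 0 < r y → 0 < k y) :
    ∑ y : Y, r y * Real.log (k y) ≤ ∑ y : Y, r y * Real.log (r y / ∑ y' : Y, r y') := by
  set s := ∑ y' : Y, r y' with hs
  rcases eq_or_lt_of_le (Finset.sum_nonneg (fun y _ => hr y) : (0:ℝ) ≤ s) with h0 | hspos
  · have : ∀ y, r y = 0 := by
      intro y
      have := (Finset.sum_eq_zero_iff_of_nonneg (fun y _ => hr y)).mp h0.symm
      exact this y (mem_univ y)
    simp [this]
  · rw [← sub_nonneg, ← Finset.sum_sub_distrib]
    have key : ∀ y ∈ (univ : Finset Y),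
        r y * Real.log (k y) - r y * Real.log (r y / s) ≤ k y * s - r y := by
      intro y _
      rcases eq_or_lt_of_le (hr y) with h0 | hy
      · simp [← h0]
        exact mul_nonneg (hk y) hspos.le
      · have hky := hpos y hy
        have : r y * Real.log (k y) - r y * Real.log (r y / s)
            = r y * Real.log (k y * s / r y) := by
          rw [Real.log_div hy.ne' hspos.ne', Real.log_div (by positivity) hy.ne',
            Real.log_mul hky.ne' hspos.ne']
          ring
        rw [this]
        have hx : 0 < k y * s / r y := by positivity
        have := Real.log_le_sub_one_of_pos hx
        calc r y * Real.log (k y * s / r y) ≤ r y * (k y * s / r y - 1) :=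
              mul_le_mul_of_nonneg_left this hy.le
          _ = k y * s - r y := by field_simp
    have h2 : ∑ y : Y, (r y * Real.log (k y) - r y * Real.log (r y / s)) ≤
        ∑ y : Y, (k y * s - r y) := Finset.sum_le_sum key
    have h3 : ∑ y : Y, (k y * s - r y) ≤ 0 := by
      rw [Finset.sum_sub_distrib, ← Finset.sum_mul]
      nlinarith
    rw [Finset.sum_sub_distrib] at h2 ⊢
    linarith

/-- **Variational lower bound on the mutual information (Section 4.1).**
For any variational classifier `h : Z → PMF Y` (positive wherever the induced joint of
`(Y,Z)` is), the expected log-likelihood `𝔼[log h(y|z)]` (the negative cross-entropy loss)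
is at most `I(Y;Z) - H(Y)`. -/
theorem cross_entropy_variational_lower_bound
    {X Y Z : Type} [Fintype X] [Fintype Y] [Fintype Z]
    [Nonempty X] [Nonempty Y] [Nonempty Z]
    (p : X × Y → ℝ) (hp0 : ∀ xy, 0 ≤ p xy) (hp1 : ∑ xy : X × Y, p xy = 1)
    (g : X → Z → ℝ) (hg0 : ∀ x z, 0 ≤ g x z) (hg1 : ∀ x, ∑ z : Z, g x z = 1)
    (h : Z → Y → ℝ) (hh0 : ∀ z y, 0 ≤ h z y) (hh1 : ∀ z, ∑ y : Y, h z y = 1)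
    (hpos : ∀ y z, 0 < ∑ x : X, p (x, y) * g x z → 0 < h z y) :
    ∑ x : X, ∑ y : Y, ∑ z : Z, p (x, y) * g x z * Real.log (h z y) ≤
      mutualInfo (jointYZ p g) - shannonEntropy (fun y => ∑ x : X, p (x, y)) := by
  set q : Y → Z → ℝ := fun y z => ∑ x : X, p (x, y) * g x z with hqdef
  have hq0 : ∀ y z, 0 ≤ q y z := fun y z =>
    Finset.sum_nonneg fun x _ => mul_nonneg (hp0 _) (hg0 _ _)
  have hY : ∀ y, (∑ x : X, p (x, y)) = ∑ z : Z, q y z := by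
    intro y
    rw [Finset.sum_comm]
    exact (Finset.sum_congr rfl fun x _ => by
      rw [← Finset.mul_sum, hg1, mul_one]).symm
  -- Step 1: rewrite the LHS in terms of the induced joint `q`.
  have hL : ∑ x : X, ∑ y : Y, ∑ z : Z, p (x, y) * g x z * Real.log (h z y)
      = ∑ y : Y, ∑ z : Z, q y z * Real.log (h z y) := by
    rw [Finset.sum_comm]
    refine Finset.sum_congr rfl fun y _ => ?_
    rw [Finset.sum_comm]
    exact Finset.sum_congr rfl fun z _ => (Finset.sum_mul _ _ _).symm
  -- Step 2: Gibbs' inequality for each `z`.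
  have hGib : ∑ z : Z, ∑ y : Y, q y z * Real.log (h z y) ≤
      ∑ z : Z, ∑ y : Y, q y z * Real.log (q y z / ∑ y' : Y, q y' z) :=
    Finset.sum_le_sum fun z _ =>
      gibbs_aux (fun y => q y z) (h z) (fun y => hq0 y z) (fun y => hh0 z y)
        (le_of_eq (hh1 z)) (fun y hy => hpos y z hy)
  -- Step 3: identify the RHS.
  have hMI : mutualInfo (jointYZ p g)
      = ∑ y : Y, ∑ z : Z,
          q y z * Real.log (q y z / ((∑ z' : Z, q y z') * (∑ y' : Y, q y' z))) := rfl
  have hR : mutualInfo (jointYZ p g) - shannonEntropy (fun y => ∑ x : X, p (x, y))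
      = ∑ y : Y, ∑ z : Z, q y z * Real.log (q y z / ∑ y' : Y, q y' z) := by
    have hent : shannonEntropy (fun y => ∑ x : X, p (x, y))
        = -∑ y : Y, ∑ z : Z, q y z * Real.log (∑ z' : Z, q y z') := by
      unfold shannonEntropy
      congr 1
      refine Finset.sum_congr rfl fun y _ => ?_
      dsimp only
      rw [hY y, Finset.sum_mul]
    rw [hMI, hent, sub_neg_eq_add, ← Finset.sum_add_distrib]
    refine Finset.sum_congr rfl fun y _ => ?_
    rw [← Finset.sum_add_distrib]
    refine Finset.sum_congr rfl fun z _ => ?_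
    rcases eq_or_lt_of_le (hq0 y z) with h0 | hq
    · simp [← h0]
    · have hqY : 0 < ∑ z' : Z, q y z' :=
        lt_of_lt_of_le hq (Finset.single_le_sum (fun z' _ => hq0 y z') (mem_univ z))
      have hqZ : 0 < ∑ y' : Y, q y' z :=
        lt_of_lt_of_le hq (Finset.single_le_sum (fun y' _ => hq0 y' z) (mem_univ y))
      rw [Real.log_div hq.ne' (by positivity), Real.log_mul hqY.ne' hqZ.ne',
        Real.log_div hq.ne' hqZ.ne']
      ring
  rw [hL, hR]
  calc ∑ y : Y, ∑ z : Z, q y z * Real.log (h z y)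
      = ∑ z : Z, ∑ y : Y, q y z * Real.log (h z y) := Finset.sum_comm
    _ ≤ ∑ z : Z, ∑ y : Y, q y z * Real.log (q y z / ∑ y' : Y, q y' z) := hGib
    _ = ∑ y : Y, ∑ z : Z, q y z * Real.log (q y z / ∑ y' : Y, q y' z) := Finset.sum_comm
end

section
/- Let X, Z be nonempty finite types, let p_X be a probability mass function on X, and let g : X → (probability mass function on Z) be a channel, with joint distribution p(x,z) = p_X(x)·g(x)(z) and Z-marginal p_Z. Let r be any probability mass function on Z that is strictly positive wherever g(x) is positive for some x with p_X(x) > 0. Then I(X;Z) ≤ Σ_x p_X(x)·D_KL( g(x) ‖ r ), and equality holds if and only if p_Z = r. -/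
open Finset

/-- Kullback–Leibler divergence between probability mass functions on a finite type
(conventions `0 · log 0 = 0`, handled automatically in `ℝ`). -/
noncomputable def klDiv {A : Type} [Fintype A] (q r : A → ℝ) : ℝ :=
  ∑ a : A, q a * Real.log (q a / r a)

lemma term_le {q r : ℝ} (hq : 0 ≤ q) (hr : 0 ≤ r) (hqr : 0 < q → 0 < r) :
    q - r ≤ q * Real.log (q / r) := by
  rcases eq_or_lt_of_le hq with h | h
  · simp [← h]; linarith
  · have hrp := hqr h
    have hl : Real.log (r / q) ≤ r / q - 1 := Real.log_le_sub_one_of_pos (by positivity)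
    have hlog : Real.log (q / r) = - Real.log (r / q) := by
      rw [← Real.log_inv]; congr 1; field_simp
    have h2 := mul_le_mul_of_nonneg_left hl hq
    rw [mul_sub, mul_div_cancel₀ _ (ne_of_gt h)] at h2
    nlinarith

lemma term_lt {q r : ℝ} (hq : 0 ≤ q) (hr : 0 ≤ r) (hqr : 0 < q → 0 < r)
    (hne : q ≠ r) : q - r < q * Real.log (q / r) := by
  rcases eq_or_lt_of_le hq with h | h
  · have h1 : r ≠ 0 := by intro h0; exact hne (by rw [← h, h0])
    have h2 : 0 < r := lt_of_le_of_ne hr (Ne.symm h1)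
    simp [← h]; linarith
  · have hrp := hqr h
    have hl : Real.log (r / q) < r / q - 1 :=
      Real.log_lt_sub_one_of_pos (by positivity)
        (by intro h1; apply hne; field_simp at h1; linarith)
    have hlog : Real.log (q / r) = - Real.log (r / q) := by
      rw [← Real.log_inv]; congr 1; field_simp
    have h2 := mul_lt_mul_of_pos_left hl h
    rw [mul_sub, mul_div_cancel₀ _ (ne_of_gt h)] at h2
    nlinarith

lemma gibbs {Z : Type} [Fintype Z] (q r : Z → ℝ) (hq0 : ∀ z, 0 ≤ q z)
    (hq1 : ∑ z : Z, q z = 1) (hr0 : ∀ z, 0 ≤ r z) (hr1 : ∑ z : Z, r z = 1)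
    (hpos : ∀ z, 0 < q z → 0 < r z) :
    0 ≤ klDiv q r ∧ (klDiv q r = 0 ↔ q = r) := by
  have hsum : ∑ z : Z, (q z - r z) = 0 := by rw [Finset.sum_sub_distrib, hq1, hr1]; ring
  have hle : 0 ≤ klDiv q r := by
    rw [← hsum]; exact Finset.sum_le_sum fun z _ => term_le (hq0 z) (hr0 z) (hpos z)
  refine ⟨hle, ?_, ?_⟩
  · intro h0
    by_contra hne
    obtain ⟨z0, hz0⟩ : ∃ z, q z ≠ r z := by
      by_contra hc; push_neg at hc; exact hne (funext hc)
    have hlt : (0:ℝ) < klDiv q r := by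
      rw [← hsum]
      exact Finset.sum_lt_sum (fun z _ => term_le (hq0 z) (hr0 z) (hpos z))
        ⟨z0, Finset.mem_univ _, term_lt (hq0 z0) (hr0 z0) (hpos z0) hz0⟩
    linarith
  · intro h; subst h
    apply Finset.sum_eq_zero
    intro z _
    rcases eq_or_lt_of_le (hq0 z) with h | h
    · simp [← h]
    · rw [div_self (ne_of_gt h), Real.log_one, mul_zero]

/-- **Variational information bottleneck upper bound `I_U(X;Z)` (Equation (6)).**
`I(X;Z) ≤ ∑_x p_X(x) D_KL(g(x) ‖ r)`, with equality if and only if the marginal `p_Z`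
of the representation equals the variational prior `r`. -/
theorem mutualInfo_le_expected_klDiv
    {X Z : Type} [Fintype X] [Fintype Z] [Nonempty X] [Nonempty Z]
    (pX : X → ℝ) (hpX0 : ∀ x, 0 ≤ pX x) (hpX1 : ∑ x : X, pX x = 1)
    (g : X → Z → ℝ) (hg0 : ∀ x z, 0 ≤ g x z) (hg1 : ∀ x, ∑ z : Z, g x z = 1)
    (r : Z → ℝ) (hr0 : ∀ z, 0 ≤ r z) (hr1 : ∑ z : Z, r z = 1)
    (hrpos : ∀ z, (∃ x, 0 < pX x ∧ 0 < g x z) → 0 < r z) :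
    mutualInfo (fun xz : X × Z => pX xz.1 * g xz.1 xz.2) ≤
      ∑ x : X, pX x * klDiv (g x) r ∧
    (mutualInfo (fun xz : X × Z => pX xz.1 * g xz.1 xz.2) =
        ∑ x : X, pX x * klDiv (g x) r ↔
      (fun z => ∑ x : X, pX x * g x z) = r) := by
  set pZ : Z → ℝ := fun z => ∑ x : X, pX x * g x z with hpZdef
  have hpZ0 : ∀ z, 0 ≤ pZ z := fun z =>
    Finset.sum_nonneg fun x _ => mul_nonneg (hpX0 x) (hg0 x z)
  have hpZ1 : ∑ z : Z, pZ z = 1 := by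
    rw [show (∑ z : Z, pZ z) = ∑ x : X, ∑ z : Z, pX x * g x z from Finset.sum_comm]
    calc ∑ x : X, ∑ z : Z, pX x * g x z = ∑ x : X, pX x * ∑ z : Z, g x z := by
          simp [Finset.mul_sum]
      _ = 1 := by simp [hg1, hpX1]
  have hpZpos : ∀ z, 0 < pZ z → 0 < r z := by
    intro z hz
    apply hrpos
    obtain ⟨x, -, hx⟩ : ∃ x ∈ Finset.univ, pX x * g x z ≠ 0 :=
      Finset.exists_ne_zero_of_sum_ne_zero (ne_of_gt hz)
    have h1 : 0 < pX x * g x z :=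
      lt_of_le_of_ne (mul_nonneg (hpX0 x) (hg0 x z)) (Ne.symm hx)
    have hpx : 0 < pX x := by
      rcases eq_or_lt_of_le (hpX0 x) with h | h
      · rw [← h, zero_mul] at h1; exact absurd h1 (lt_irrefl 0)
      · exact h
    have hgx : 0 < g x z := by
      rcases eq_or_lt_of_le (hg0 x z) with h | h
      · rw [← h, mul_zero] at h1; exact absurd h1 (lt_irrefl 0)
      · exact h
    exact ⟨x, hpx, hgx⟩
  -- key identity
  have key : mutualInfo (fun xz : X × Z => pX xz.1 * g xz.1 xz.2) =
      (∑ x : X, pX x * klDiv (g x) r) - klDiv pZ r := by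
    unfold mutualInfo klDiv
    beta_reduce
    have hkl : (∑ z : Z, pZ z * Real.log (pZ z / r z)) =
        ∑ x : X, ∑ z : Z, pX x * g x z * Real.log (pZ z / r z) := by
      rw [Finset.sum_comm]
      apply Finset.sum_congr rfl
      intro z _
      rw [hpZdef]
      rw [Finset.sum_mul]
    rw [hkl]
    rw [← Finset.sum_sub_distrib]
    apply Finset.sum_congr rfl
    intro x _
    rw [Finset.mul_sum, ← Finset.sum_sub_distrib]
    apply Finset.sum_congr rfl
    intro z _
    rcases eq_or_lt_of_le (hpX0 x) with hx | hx
    · simp [← hx]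
    rcases eq_or_lt_of_le (hg0 x z) with hgz | hgz
    · simp [← hgz]
    have hmarg : (∑ z' : Z, pX x * g x z') = pX x := by
      rw [← Finset.mul_sum, hg1, mul_one]
    have hpz : 0 < pZ z := by
      have : pX x * g x z ≤ pZ z :=
        Finset.single_le_sum (fun x' _ => mul_nonneg (hpX0 x') (hg0 x' z)) (Finset.mem_univ x)
      nlinarith
    have hrz : 0 < r z := hpZpos z hpz
    rw [hmarg]
    have harg : pX x * g x z / (pX x * pZ z) = g x z / pZ z := by
      rw [mul_div_mul_left _ _ (ne_of_gt hx)]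
    rw [harg, Real.log_div (ne_of_gt hgz) (ne_of_gt hpz),
        Real.log_div (ne_of_gt hgz) (ne_of_gt hrz),
        Real.log_div (ne_of_gt hpz) (ne_of_gt hrz)]
    ring
  obtain ⟨hg_nonneg, hg_iff⟩ := gibbs pZ r hpZ0 hpZ1 hr0 hr1 hpZpos
  constructor
  · rw [key]; linarith
  · rw [key]
    constructor
    · intro h
      apply hg_iff.mp
      linarith
    · intro h
      have := hg_iff.mpr h
      linarith
end

section
/- Let Z be a nonempty finite type and let q_s, q_t be probability mass functions on Z. Then the maximum over discriminators D : Z → (0,1) of the adversarial objective V(D) = Σ_z q_s(z)·log D(z) + Σ_z q_t(z)·log(1 − D(z)) equals −log 4 + 2·JSD(q_s ‖ q_t), where JSD denotes the Jensen–Shannon divergence. Consequently this maximal value is at least −log 4, with equality if and only if q_s = q_t. -/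
open Finset

/-- Jensen–Shannon divergence between probability mass functions on a finite type. -/
noncomputable def jsd {A : Type} [Fintype A] (q r : A → ℝ) : ℝ :=
  (1 / 2) * klDiv q (fun a => (q a + r a) / 2) +
    (1 / 2) * klDiv r (fun a => (q a + r a) / 2)

/-- The adversarial (GAN) objective for a discriminator `D` between distributions
`qs` and `qt` on the latent space `Z` (terms with weight `0` vanish automatically). -/
noncomputable def advObjective {Z : Type} [Fintype Z] (qs qt : Z → ℝ) (D : Z → ℝ) : ℝ :=
  ∑ z : Z, qs z * Real.log (D z) + ∑ z : Z, qt z * Real.log (1 - D z)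

private lemma key_half (a c D : ℝ) (ha : 0 ≤ a) (hac : a ≤ c) (hD : 0 < D) :
    a * Real.log D - a * Real.log (a / c) ≤ D * c - a := by
  rcases eq_or_lt_of_le ha with h0 | h0
  · subst h0
    simp only [zero_mul, sub_zero, zero_div]
    have : 0 ≤ c := hac
    positivity
  · have hc : 0 < c := lt_of_lt_of_le h0 hac
    have hx : 0 < D * c / a := by positivity
    have hle := Real.log_le_sub_one_of_pos hx
    have hlog : Real.log D - Real.log (a / c) = Real.log (D * c / a) := by
      rw [Real.log_div h0.ne' hc.ne', Real.log_div (mul_pos hD hc).ne' h0.ne',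
        Real.log_mul hD.ne' hc.ne']
      ring
    have heq : a * Real.log D - a * Real.log (a / c) = a * Real.log (D * c / a) := by
      rw [← hlog]; ring
    rw [heq]
    have h2 : a * Real.log (D * c / a) ≤ a * (D * c / a - 1) :=
      mul_le_mul_of_nonneg_left hle ha
    calc a * Real.log (D * c / a) ≤ a * (D * c / a - 1) := h2
      _ = D * c - a := by field_simp

private lemma ptwise_le (a b D : ℝ) (ha : 0 ≤ a) (hb : 0 ≤ b) (hD0 : 0 < D) (hD1 : D < 1) :
    a * Real.log D + b * Real.log (1 - D) ≤
      a * Real.log (a / (a + b)) + b * Real.log (b / (a + b)) := by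
  have h1 := key_half a (a + b) D ha (by linarith) hD0
  have h2 := key_half b (a + b) (1 - D) hb (by linarith) (by linarith)
  nlinarith [h1, h2]

private lemma gibbs_term (a m : ℝ) (ha : 0 ≤ a) (ham : a ≤ 2 * m) :
    a - m ≤ a * Real.log (a / m) := by
  rcases eq_or_lt_of_le ha with h0 | h0
  · subst h0; simp; linarith
  · have hm : 0 < m := by linarith
    have hx : 0 < m / a := by positivity
    have hle := Real.log_le_sub_one_of_pos hx
    have hlog : Real.log (a / m) = -Real.log (m / a) := by
      rw [Real.log_div h0.ne' hm.ne', Real.log_div hm.ne' h0.ne']; ring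
    rw [hlog]
    have h2 : a * Real.log (m / a) ≤ a * (m / a - 1) := mul_le_mul_of_nonneg_left hle ha
    have : a * (m / a - 1) = m - a := by field_simp
    nlinarith

private lemma gibbs_term_eq (a m : ℝ) (ha : 0 ≤ a) (ham : a ≤ 2 * m)
    (heq : a * Real.log (a / m) - (a - m) = 0) : a = m := by
  rcases eq_or_lt_of_le ha with h0 | h0
  · subst h0; simp at heq; linarith
  · have hm : 0 < m := by linarith
    by_contra hne
    have hx : 0 < m / a := by positivity
    have hne' : m / a ≠ 1 := by
      intro h
      apply hne
      field_simp at h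
      linarith
    have hlt := Real.log_lt_sub_one_of_pos hx hne'
    have hlog : Real.log (a / m) = -Real.log (m / a) := by
      rw [Real.log_div h0.ne' hm.ne', Real.log_div hm.ne' h0.ne']; ring
    rw [hlog] at heq
    have h2 : a * Real.log (m / a) < a * (m / a - 1) :=
      mul_lt_mul_of_pos_left hlt h0
    have : a * (m / a - 1) = m - a := by field_simp
    nlinarith

private lemma kl_m_nonneg {Z : Type} [Fintype Z] (q r : Z → ℝ)
    (hq0 : ∀ z, 0 ≤ q z) (hr0 : ∀ z, 0 ≤ r z)
    (hq1 : ∑ z : Z, q z = 1) (hr1 : ∑ z : Z, r z = 1) :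
    0 ≤ klDiv q (fun z => (q z + r z) / 2) := by
  have h : ∀ z : Z, q z - (q z + r z) / 2 ≤ q z * Real.log (q z / ((q z + r z) / 2)) :=
    fun z => gibbs_term _ _ (hq0 z) (by have := hr0 z; linarith)
  have hsum : ∑ z : Z, (q z - (q z + r z) / 2) ≤ klDiv q (fun z => (q z + r z) / 2) :=
    Finset.sum_le_sum (fun z _ => h z)
  have : ∑ z : Z, (q z - (q z + r z) / 2) = 0 := by
    rw [Finset.sum_sub_distrib]
    rw [show (∑ z : Z, (q z + r z) / 2) = (∑ z : Z, q z + ∑ z : Z, r z) / 2 by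
      rw [← Finset.sum_add_distrib, Finset.sum_div]]
    rw [hq1, hr1]; norm_num
  linarith

private lemma kl_m_eq_zero {Z : Type} [Fintype Z] (q r : Z → ℝ)
    (hq0 : ∀ z, 0 ≤ q z) (hr0 : ∀ z, 0 ≤ r z)
    (hq1 : ∑ z : Z, q z = 1) (hr1 : ∑ z : Z, r z = 1)
    (hkl : klDiv q (fun z => (q z + r z) / 2) = 0) : q = r := by
  have hsum0 : ∑ z : Z,
      (q z * Real.log (q z / ((q z + r z) / 2)) - (q z - (q z + r z) / 2)) = 0 := by
    rw [Finset.sum_sub_distrib]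
    have h2 : ∑ z : Z, (q z - (q z + r z) / 2) = 0 := by
      rw [Finset.sum_sub_distrib]
      rw [show (∑ z : Z, (q z + r z) / 2) = (∑ z : Z, q z + ∑ z : Z, r z) / 2 by
        rw [← Finset.sum_add_distrib, Finset.sum_div]]
      rw [hq1, hr1]; norm_num
    rw [h2]
    simpa [klDiv] using hkl
  have hnn : ∀ z ∈ Finset.univ,
      0 ≤ q z * Real.log (q z / ((q z + r z) / 2)) - (q z - (q z + r z) / 2) :=
    fun z _ => by
      have := gibbs_term (q z) ((q z + r z) / 2) (hq0 z) (by have := hr0 z; linarith)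
      linarith
  have hall := (Finset.sum_eq_zero_iff_of_nonneg hnn).1 hsum0
  funext z
  have hz := hall z (Finset.mem_univ z)
  have := gibbs_term_eq (q z) ((q z + r z) / 2) (hq0 z) (by have := hr0 z; linarith) hz
  linarith

private lemma kl_self {Z : Type} [Fintype Z] (q : Z → ℝ) :
    klDiv q (fun z => (q z + q z) / 2) = 0 := by
  apply Finset.sum_eq_zero
  intro z _
  rcases eq_or_ne (q z) 0 with h | h
  · simp [h]
  · simp only []
    rw [show (q z + q z) / 2 = q z by ring, div_self h, Real.log_one, mul_zero]

private lemma term_tendsto (a S : ℝ) (ha : 0 ≤ a) (haS : a ≤ S) :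
    Filter.Tendsto (fun δ : ℝ => a * Real.log ((a + δ) / (S + 2 * δ)))
      (nhdsWithin 0 (Set.Ioi 0)) (nhds (a * Real.log (a / S))) := by
  rcases eq_or_lt_of_le ha with h0 | h0
  · subst h0
    simp only [zero_mul]
    exact tendsto_const_nhds
  · have hS : 0 < S := lt_of_lt_of_le h0 haS
    have h1 : ContinuousAt (fun δ : ℝ => (a + δ) / (S + 2 * δ)) 0 := by
      apply ContinuousAt.div
      · fun_prop
      · fun_prop
      · simp; positivity
    have hval : (a + (0:ℝ)) / (S + 2 * 0) = a / S := by norm_num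
    have h2 : ContinuousAt (fun δ : ℝ => Real.log ((a + δ) / (S + 2 * δ))) 0 :=
      h1.log (by rw [hval]; positivity)
    have h3 : ContinuousAt (fun δ : ℝ => a * Real.log ((a + δ) / (S + 2 * δ))) 0 :=
      continuousAt_const.mul h2
    have h4 := h3.tendsto.mono_left (nhdsWithin_le_nhds (s := Set.Ioi (0:ℝ)))
    simpa [hval] using h4

private lemma jsd_term (a b : ℝ) (ha : 0 ≤ a) (hb : 0 ≤ b) :
    a * Real.log (a / ((a + b) / 2)) = a * Real.log 2 + a * Real.log (a / (a + b)) := by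
  rcases eq_or_lt_of_le ha with h0 | h0
  · subst h0; simp
  · have hab : 0 < a + b := by linarith
    have h1 : a / ((a + b) / 2) = 2 * (a / (a + b)) := by field_simp
    rw [h1, Real.log_mul two_ne_zero (by positivity : a / (a+b) > 0).ne', mul_add]

/-- **Optimal adversarial objective value (Goodfellow et al.).**
The supremum of the adversarial objective over discriminators `D : Z → (0,1)` equals
`-log 4 + 2 · JSD(qs ‖ qt)`; consequently it is at least `-log 4`, with equality
if and only if `qs = qt`. -/
theorem sSup_advObjective_eq_jsd
    {Z : Type} [Fintype Z] [Nonempty Z]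
    (qs qt : Z → ℝ) (hqs0 : ∀ z, 0 ≤ qs z) (hqs1 : ∑ z : Z, qs z = 1)
    (hqt0 : ∀ z, 0 ≤ qt z) (hqt1 : ∑ z : Z, qt z = 1) :
    sSup {v : ℝ | ∃ D : Z → ℝ, (∀ z, 0 < D z ∧ D z < 1) ∧ v = advObjective qs qt D} =
        -Real.log 4 + 2 * jsd qs qt ∧
      -Real.log 4 ≤
        sSup {v : ℝ | ∃ D : Z → ℝ, (∀ z, 0 < D z ∧ D z < 1) ∧ v = advObjective qs qt D} ∧
      (sSup {v : ℝ | ∃ D : Z → ℝ, (∀ z, 0 < D z ∧ D z < 1) ∧ v = advObjective qs qt D} =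
          -Real.log 4 ↔ qs = qt) := by
  set V : Set ℝ :=
    {v : ℝ | ∃ D : Z → ℝ, (∀ z, 0 < D z ∧ D z < 1) ∧ v = advObjective qs qt D} with hV
  set Vstar : ℝ := ∑ z : Z,
    (qs z * Real.log (qs z / (qs z + qt z)) + qt z * Real.log (qt z / (qs z + qt z)))
    with hVstar
  -- the identity -log 4 + 2 jsd = Vstar
  have hlog4 : Real.log 4 = 2 * Real.log 2 := by
    rw [show (4:ℝ) = 2 ^ 2 by norm_num, Real.log_pow]
    push_cast; ring
  have hsq : ∑ z : Z, qs z * Real.log (qs z / ((qs z + qt z) / 2)) =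
      Real.log 2 + ∑ z : Z, qs z * Real.log (qs z / (qs z + qt z)) := by
    rw [Finset.sum_congr rfl (fun z _ => jsd_term (qs z) (qt z) (hqs0 z) (hqt0 z)),
      Finset.sum_add_distrib, ← Finset.sum_mul, hqs1, one_mul]
  have hst : ∑ z : Z, qt z * Real.log (qt z / ((qs z + qt z) / 2)) =
      Real.log 2 + ∑ z : Z, qt z * Real.log (qt z / (qs z + qt z)) := by
    have hterm : ∀ z : Z, qt z * Real.log (qt z / ((qs z + qt z) / 2)) =
        qt z * Real.log 2 + qt z * Real.log (qt z / (qs z + qt z)) := by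
      intro z
      have := jsd_term (qt z) (qs z) (hqt0 z) (hqs0 z)
      rwa [add_comm (qt z) (qs z)] at this
    rw [Finset.sum_congr rfl (fun z _ => hterm z),
      Finset.sum_add_distrib, ← Finset.sum_mul, hqt1, one_mul]
  have hid : -Real.log 4 + 2 * jsd qs qt = Vstar := by
    have h2j : 2 * jsd qs qt =
        klDiv qs (fun z => (qs z + qt z) / 2) + klDiv qt (fun z => (qs z + qt z) / 2) := by
      rw [jsd]; ring
    rw [h2j, klDiv, klDiv, hsq, hst, hVstar, Finset.sum_add_distrib, hlog4]
    ring
  -- upper bound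
  have hub : ∀ v ∈ V, v ≤ Vstar := by
    rintro v ⟨D, hD, rfl⟩
    rw [advObjective, ← Finset.sum_add_distrib, hVstar]
    exact Finset.sum_le_sum fun z _ =>
      ptwise_le (qs z) (qt z) (D z) (hqs0 z) (hqt0 z) (hD z).1 (hD z).2
  have hbdd : BddAbove V := ⟨Vstar, hub⟩
  -- approximating family
  set f : ℝ → ℝ := fun δ => ∑ z : Z,
    (qs z * Real.log ((qs z + δ) / (qs z + qt z + 2 * δ)) +
      qt z * Real.log ((qt z + δ) / (qs z + qt z + 2 * δ))) with hf
  have hmem : ∀ δ : ℝ, 0 < δ → f δ ∈ V := by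
    intro δ hδ
    refine ⟨fun z => (qs z + δ) / (qs z + qt z + 2 * δ), fun z => ⟨?_, ?_⟩, ?_⟩
    · have h1 := hqs0 z; have h2 := hqt0 z; positivity
    · have h1 := hqs0 z; have h2 := hqt0 z
      rw [div_lt_one (by linarith)]
      linarith
    · have hcompl : ∀ z : Z, 1 - (qs z + δ) / (qs z + qt z + 2 * δ) =
          (qt z + δ) / (qs z + qt z + 2 * δ) := by
        intro z
        have h1 := hqs0 z; have h2 := hqt0 z
        field_simp
        ring
      rw [advObjective, hf]
      simp only [hcompl]
      rw [← Finset.sum_add_distrib]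
  have hne : V.Nonempty := ⟨f 1, hmem 1 one_pos⟩
  have hle1 : sSup V ≤ Vstar := csSup_le hne hub
  have htend : Filter.Tendsto f (nhdsWithin 0 (Set.Ioi 0)) (nhds Vstar) := by
    rw [hf, hVstar]
    apply tendsto_finset_sum
    intro z _
    have h1 := term_tendsto (qs z) (qs z + qt z) (hqs0 z) (by have := hqt0 z; linarith)
    have h2 := term_tendsto (qt z) (qs z + qt z) (hqt0 z) (by have := hqs0 z; linarith)
    have h2' : Filter.Tendsto (fun δ : ℝ => qt z * Real.log ((qt z + δ) / (qs z + qt z + 2 * δ)))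
        (nhdsWithin 0 (Set.Ioi 0)) (nhds (qt z * Real.log (qt z / (qs z + qt z)))) := h2
    exact h1.add h2'
  have hge1 : Vstar ≤ sSup V := by
    refine le_of_tendsto htend ?_
    filter_upwards [self_mem_nhdsWithin] with δ hδ
    exact le_csSup hbdd (hmem δ hδ)
  have heq : sSup V = Vstar := le_antisymm hle1 hge1
  have hmain : sSup V = -Real.log 4 + 2 * jsd qs qt := heq.trans hid.symm
  -- nonnegativity of jsd
  have hkl1 : 0 ≤ klDiv qs (fun z => (qs z + qt z) / 2) :=
    kl_m_nonneg qs qt hqs0 hqt0 hqs1 hqt1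
  have hkl2 : 0 ≤ klDiv qt (fun z => (qs z + qt z) / 2) := by
    have h := kl_m_nonneg qt qs hqt0 hqs0 hqt1 hqs1
    have hfun : (fun z => (qt z + qs z) / 2) = (fun z : Z => (qs z + qt z) / 2) := by
      funext z; ring
    rwa [hfun] at h
  have hjsd0 : 0 ≤ jsd qs qt := by
    rw [jsd]; linarith
  refine ⟨hmain, by rw [hmain]; linarith, ?_⟩
  constructor
  · intro h
    have hj : jsd qs qt = 0 := by
      rw [hmain] at h; linarith
    have hkz : klDiv qs (fun z => (qs z + qt z) / 2) = 0 := by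
      rw [jsd] at hj; linarith
    exact kl_m_eq_zero qs qt hqs0 hqt0 hqs1 hqt1 hkz
  · intro h
    subst h
    have : jsd qs qs = 0 := by
      rw [jsd, kl_self]; ring
    rw [hmain, this]; ring
end
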